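/- arXiv:1607.02101 — 2 statements merged into one kernel-verified Lean document; each statement's English description precedes it below -/
import Mathlib

section
/- Under the stated spirallike-starlike subordination hypothesis with p₁ ≠ 0, writing ϑ₂ = [2]_q − 1 and ϑ₃ = [3]_q − 1, for every complex number μ one has the Fekete–Szegő bound |a₃ − μ·a₂²| ≤ (10·|b|·|p₁|/(|ϱ|·ϑ₃)) · max{ 1, | p₂/p₁ + b·p₁·(10·ϑ₂ − 9·μ·ϑ₃)/(10·ϱ·ϑ₂²) | }. -/
open Metric Filter Complex

private lemma evIteratedDeriv {f g : ℂ → ℂ} {x : ℂ} (h : f =ᶠ[nhds x] g) (n : ℕ) :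
    iteratedDeriv n f =ᶠ[nhds x] iteratedDeriv n g := by
  induction n with
  | zero => simpa [iteratedDeriv_zero] using h
  | succ n ih => simpa only [iteratedDeriv_succ] using ih.deriv

private lemma aux_hasFPower (c : ℕ → ℂ) (g : ℂ → ℂ) {r : ℝ} (hr : 0 < r)
    (h : ∀ y : ℂ, ‖y‖ < r → HasSum (fun n => c n * y ^ n) (g y)) :
    HasFPowerSeriesOnBall g (FormalMultilinearSeries.ofScalars ℂ c) 0
      ((Real.toNNReal (r/2) : NNReal) : ENNReal) := by
  have hr2 : (0:ℝ) < r / 2 := by linarith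
  have hmem : ∀ y : ℂ, y ∈ Metric.eball (0:ℂ) ((Real.toNNReal (r/2) : NNReal) : ENNReal) →
      ‖y‖ < r := by
    intro y hy
    rw [mem_emetric_ball_zero_iff, enorm_eq_nnnorm, ENNReal.coe_lt_coe, ← NNReal.coe_lt_coe,
      Real.coe_toNNReal _ hr2.le] at hy
    calc ‖y‖ = ‖y‖ := rfl
    _ < r / 2 := hy
    _ < r := by linarith
  constructor
  · -- radius
    apply FormalMultilinearSeries.le_radius_of_summable_norm
    have habs : ‖((r/2 : ℝ) : ℂ)‖ < r := by
      rw [Complex.norm_real, Real.norm_eq_abs, abs_of_pos hr2]; linarith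
    have hs : Summable (fun n => ‖c n * ((r/2 : ℝ) : ℂ) ^ n‖) := by
      rw [summable_norm_iff]
      exact (h _ habs).summable
    apply hs.congr
    intro n
    rw [norm_mul, norm_pow, FormalMultilinearSeries.ofScalars_norm]
    congr 2
    rw [Real.coe_toNNReal _ hr2.le, Complex.norm_real, Real.norm_eq_abs, abs_of_pos hr2]
  · simpa using hr2
  · intro y hy
    have hcoef : ∀ n, (FormalMultilinearSeries.ofScalars ℂ c).coeff n = c n := by
      intro n
      have h1 := FormalMultilinearSeries.ofScalars_apply_eq (E := ℂ) (c := c) (1:ℂ) n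
      rw [FormalMultilinearSeries.coeff]
      set_option maxRecDepth 4000 in
      simpa using h1
    have := h y (hmem y hy)
    simpa [FormalMultilinearSeries.ofScalars_apply_eq, smul_eq_mul, hcoef, mul_comm] using this

private lemma aux_coeff (c : ℕ → ℂ) (g : ℂ → ℂ) {r : ℝ} (hr : 0 < r)
    (h : ∀ y : ℂ, ‖y‖ < r → HasSum (fun n => c n * y ^ n) (g y)) (n : ℕ) :
    iteratedDeriv n g 0 = (n.factorial : ℂ) * c n := by
  have H := aux_hasFPower c g hr h
  have h2 := H.factorial_smul (1 : ℂ) n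
  rw [iteratedDeriv_eq_iteratedFDeriv, ← h2, FormalMultilinearSeries.ofScalars_apply_eq]
  simp [nsmul_eq_mul]

private lemma aux_analyticAt (c : ℕ → ℂ) (g : ℂ → ℂ) {r : ℝ} (hr : 0 < r)
    (h : ∀ y : ℂ, ‖y‖ < r → HasSum (fun n => c n * y ^ n) (g y)) :
    AnalyticAt ℂ g 0 :=
  (aux_hasFPower c g hr h).analyticAt

private lemma aux_deriv_analyticAt {f : ℂ → ℂ} {x : ℂ} (h : AnalyticAt ℂ f x) :
    AnalyticAt ℂ (deriv f) x := by
  obtain ⟨s, hs, hf⟩ := h.exists_mem_nhds_analyticOnNhd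
  exact hf.deriv x (mem_of_mem_nhds hs)

private lemma aux_deriv_mul_ev {f g : ℂ → ℂ} {x : ℂ} (hf : AnalyticAt ℂ f x)
    (hg : AnalyticAt ℂ g x) :
    deriv (fun z => f z * g z) =ᶠ[nhds x] fun z => deriv f z * g z + f z * deriv g z := by
  filter_upwards [hf.eventually_analyticAt, hg.eventually_analyticAt] with z hfz hgz
  exact deriv_mul hfz.differentiableAt hgz.differentiableAt

private lemma aux_iteratedDeriv_two_mul {f g : ℂ → ℂ} {x : ℂ} (hf : AnalyticAt ℂ f x)
    (hg : AnalyticAt ℂ g x) :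
    iteratedDeriv 2 (fun z => f z * g z) x =
      iteratedDeriv 2 f x * g x + 2 * (deriv f x * deriv g x) + f x * iteratedDeriv 2 g x := by
  have h1 := aux_deriv_mul_ev hf hg
  have e2 : ∀ h : ℂ → ℂ, iteratedDeriv 2 h x = deriv (deriv h) x := by
    intro h
    rw [iteratedDeriv_succ, iteratedDeriv_one]
  rw [e2, e2, e2, h1.deriv_eq]
  rw [deriv_fun_add ((aux_deriv_analyticAt hf).differentiableAt.fun_mul hg.differentiableAt)
    (hf.differentiableAt.fun_mul (aux_deriv_analyticAt hg).differentiableAt),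
    deriv_fun_mul (aux_deriv_analyticAt hf).differentiableAt hg.differentiableAt,
    deriv_fun_mul hf.differentiableAt (aux_deriv_analyticAt hg).differentiableAt]
  ring

private lemma aux_iteratedDeriv_three_mul {f g : ℂ → ℂ} {x : ℂ} (hf : AnalyticAt ℂ f x)
    (hg : AnalyticAt ℂ g x) :
    iteratedDeriv 3 (fun z => f z * g z) x =
      iteratedDeriv 3 f x * g x + 3 * (iteratedDeriv 2 f x * deriv g x)
        + 3 * (deriv f x * iteratedDeriv 2 g x) + f x * iteratedDeriv 3 g x := by
  have h1 := aux_deriv_mul_ev hf hg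
  have h2 : deriv (fun z => deriv f z * g z + f z * deriv g z) =ᶠ[nhds x]
      fun z => (deriv (deriv f) z * g z + deriv f z * deriv g z)
        + (deriv f z * deriv g z + f z * deriv (deriv g) z) := by
    filter_upwards [hf.eventually_analyticAt, hg.eventually_analyticAt] with z hfz hgz
    rw [deriv_fun_add ((aux_deriv_analyticAt hfz).differentiableAt.fun_mul hgz.differentiableAt)
      (hfz.differentiableAt.fun_mul (aux_deriv_analyticAt hgz).differentiableAt),
      deriv_fun_mul (aux_deriv_analyticAt hfz).differentiableAt hgz.differentiableAt,
      deriv_fun_mul hfz.differentiableAt (aux_deriv_analyticAt hgz).differentiableAt]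
  have e3 : ∀ h : ℂ → ℂ, iteratedDeriv 3 h x = deriv (deriv (deriv h)) x := by
    intro h
    rw [iteratedDeriv_succ, iteratedDeriv_succ, iteratedDeriv_one]
  have e2 : ∀ h : ℂ → ℂ, iteratedDeriv 2 h x = deriv (deriv h) x := by
    intro h
    rw [iteratedDeriv_succ, iteratedDeriv_one]
  rw [e3, e3, e3, e2, e2, (h1.deriv.trans h2).deriv_eq]
  have dff := (aux_deriv_analyticAt (aux_deriv_analyticAt hf)).differentiableAt
  have dffg := (aux_deriv_analyticAt hf).differentiableAt
  have dgg := (aux_deriv_analyticAt (aux_deriv_analyticAt hg)).differentiableAt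
  have dggf := (aux_deriv_analyticAt hg).differentiableAt
  rw [deriv_fun_add (((aux_deriv_analyticAt (aux_deriv_analyticAt hf)).differentiableAt.fun_mul
        hg.differentiableAt).fun_add (dffg.fun_mul dggf))
      ((dffg.fun_mul dggf).fun_add (hf.differentiableAt.fun_mul dgg)),
    deriv_fun_add ((aux_deriv_analyticAt (aux_deriv_analyticAt hf)).differentiableAt.fun_mul
        hg.differentiableAt) (dffg.fun_mul dggf),
    deriv_fun_add (dffg.fun_mul dggf) (hf.differentiableAt.fun_mul dgg),
    deriv_fun_mul dff hg.differentiableAt, deriv_fun_mul dffg dggf,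
    deriv_fun_mul hf.differentiableAt dgg]
  ring

private lemma aux_mobius_lt {α ζ : ℂ} (hα : ‖α‖ < 1) (hζ : ‖ζ‖ < 1) :
    ‖(ζ - α) / (1 - (starRingEnd ℂ) α * ζ)‖ < 1 := by
  have key : Complex.normSq (1 - (starRingEnd ℂ) α * ζ) - Complex.normSq (ζ - α)
      = (1 - Complex.normSq α) * (1 - Complex.normSq ζ) := by
    simp only [Complex.normSq_apply, Complex.mul_re, Complex.mul_im, Complex.sub_re,
      Complex.sub_im, Complex.one_re, Complex.one_im, Complex.conj_re, Complex.conj_im]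
    ring
  have hα2 : Complex.normSq α < 1 := by
    have : (‖α‖)^2 < 1 := by nlinarith [norm_nonneg α]
    rw [Complex.sq_norm] at this; linarith
  have hζ2 : Complex.normSq ζ < 1 := by
    have : (‖ζ‖)^2 < 1 := by nlinarith [norm_nonneg ζ]
    rw [Complex.sq_norm] at this; linarith
  have hpos : 0 < (1 - Complex.normSq α) * (1 - Complex.normSq ζ) := by nlinarith
  have hlt : Complex.normSq (ζ - α) < Complex.normSq (1 - (starRingEnd ℂ) α * ζ) := by linarith
  have hdpos : 0 < ‖1 - (starRingEnd ℂ) α * ζ‖ := by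
    rw [Complex.norm_def]
    have : (0:ℝ) < Complex.normSq (1 - (starRingEnd ℂ) α * ζ) :=
      lt_of_le_of_lt (Complex.normSq_nonneg _) hlt
    positivity
  rw [norm_div, div_lt_one hdpos, Complex.norm_def, Complex.norm_def]
  exact Real.sqrt_lt_sqrt (Complex.normSq_nonneg _) hlt

private lemma aux_schwarz_coeff {w : ℂ → ℂ} (hw : AnalyticOnNhd ℂ w (ball 0 1)) (hw0 : w 0 = 0)
    (hwb : ∀ z ∈ ball (0:ℂ) 1, ‖w z‖ < 1) :
    ‖deriv w 0‖ ≤ 1 ∧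
    ‖iteratedDeriv 2 w 0 / 2‖ ≤ 1 - (‖deriv w 0‖)^2 := by
  have h0 : (0:ℂ) ∈ ball (0:ℂ) 1 := mem_ball_self one_pos
  have hd : DifferentiableOn ℂ w (ball 0 1) := hw.differentiableOn
  have hmaps : Set.MapsTo w (ball (0:ℂ) 1) (ball (w 0) 1) := by
    rw [hw0]
    intro z hz
    exact mem_ball_zero_iff.mpr (hwb z hz)
  have hc1 : ‖deriv w 0‖ ≤ 1 :=
    Complex.norm_deriv_le_one_of_mapsTo_ball hd (hmaps.mono_right ball_subset_closedBall) one_pos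
  refine ⟨hc1, ?_⟩
  set v : ℂ → ℂ := dslope w 0 with hv
  have hvb : ∀ z ∈ ball (0:ℂ) 1, ‖v z‖ ≤ 1 := by
    intro z hz
    have := Complex.norm_dslope_le_div_of_mapsTo_ball hd (hmaps.mono_right ball_subset_closedBall) hz
    simpa using this
  have hvd : DifferentiableOn ℂ v (ball 0 1) :=
    (differentiableOn_dslope (ball_mem_nhds _ one_pos)).mpr hd
  have hv0 : v 0 = deriv w 0 := dslope_same w 0
  -- identify deriv v 0 with half the second derivative of w
  obtain ⟨pw, hpw⟩ := hw 0 h0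
  have hdv : deriv v 0 = pw.coeff 2 := by
    have h1 := (hpw.has_fpower_series_dslope_fslope).deriv
    rw [hv, h1]
    have : pw.fslope 1 (fun _ => (1:ℂ)) = pw.fslope.coeff 1 := rfl
    rw [this, FormalMultilinearSeries.coeff_fslope]
  have hc2 : iteratedDeriv 2 w 0 / 2 = pw.coeff 2 := by
    obtain ⟨rr, hball⟩ := hpw
    have h2 := hball.factorial_smul (1:ℂ) 2
    have h3 : pw 2 (fun _ => (1:ℂ)) = pw.coeff 2 := rfl
    rw [h3] at h2
    rw [iteratedDeriv_eq_iteratedFDeriv, ← h2]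
    simp [Nat.factorial]
  rw [hc2, ← hdv, ← hv0]
  -- goal : abs (deriv v 0) ≤ 1 - abs (v 0) ^ 2
  by_cases hcase : ∀ z ∈ ball (0:ℂ) 1, ‖v z‖ < 1
  · set α := v 0 with hαdef
    have hα : ‖α‖ < 1 := hcase 0 h0
    have hne : ∀ z ∈ ball (0:ℂ) 1, (1 - (starRingEnd ℂ) α * v z) ≠ 0 := by
      intro z hz hzero
      have h1 : ‖(starRingEnd ℂ) α * v z‖ < 1 := by
        rw [norm_mul, Complex.norm_conj]
        calc ‖α‖ * ‖v z‖ ≤ ‖α‖ * 1 :=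
          mul_le_mul_of_nonneg_left (hvb z hz) (norm_nonneg α)
        _ < 1 := by simpa using hα
      rw [sub_eq_zero] at hzero
      rw [← hzero] at h1
      simp at h1
    set g : ℂ → ℂ := fun z => (v z - α) / (1 - (starRingEnd ℂ) α * v z) with hg
    have hg0 : g 0 = 0 := by
      rw [hg]
      simp [hαdef]
    have hgd : DifferentiableOn ℂ g (ball 0 1) := by
      intro z hz
      exact DifferentiableWithinAt.div ((hvd z hz).sub (differentiableWithinAt_const α))
        ((differentiableWithinAt_const 1).sub ((differentiableWithinAt_const _).mul (hvd z hz)))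
        (hne z hz)
    have hgmaps : Set.MapsTo g (ball (0:ℂ) 1) (ball (0:ℂ) 1) := by
      intro z hz
      exact mem_ball_zero_iff.mpr (aux_mobius_lt hα (hcase z hz))
    have habs : ‖deriv g 0‖ ≤ 1 :=
      Complex.norm_deriv_le_one_of_mapsTo_ball hgd (by rw [hg0]; exact hgmaps.mono_right ball_subset_closedBall) one_pos
    set d : ℂ := 1 - (starRingEnd ℂ) α * α with hd'
    have hdne : d ≠ 0 := by
      have := hne 0 h0
      rwa [hαdef] at this
    have hva : HasDerivAt v (deriv v 0) 0 :=
      (hvd.differentiableAt (ball_mem_nhds _ one_pos)).hasDerivAt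
    have h1 : HasDerivAt (fun z => v z - α) (deriv v 0) 0 := hva.sub_const α
    have h2 : HasDerivAt (fun z => 1 - (starRingEnd ℂ) α * v z)
        (-((starRingEnd ℂ) α * deriv v 0)) 0 := (hva.const_mul ((starRingEnd ℂ) α)).const_sub 1
    have h3 := (h1.fun_div h2 (hne 0 h0)).deriv
    have hgderiv : deriv g 0 = deriv v 0 / d := by
      have hrfl : deriv g 0 = deriv (fun y => (v y - α) / (1 - (starRingEnd ℂ) α * v y)) 0 := rfl
      rw [hrfl, h3, ← hαdef]
      rw [show (1 - (starRingEnd ℂ) α * α) = d from hd'.symm]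
      have hsub : α - α = 0 := sub_self α
      rw [hsub]
      field_simp
      ring
    have habs2 : ‖deriv v 0‖ ≤ ‖d‖ := by
      rw [hgderiv, norm_div] at habs
      have hdabs : 0 < ‖d‖ := norm_pos_iff.mpr hdne
      calc ‖deriv v 0‖ = ‖deriv v 0‖ / ‖d‖ * ‖d‖ := by
            field_simp
      _ ≤ 1 * ‖d‖ := mul_le_mul_of_nonneg_right habs hdabs.le
      _ = ‖d‖ := one_mul _
    have hdval : ‖d‖ = 1 - (‖α‖)^2 := by
      have : d = ((1 - Complex.normSq α : ℝ) : ℂ) := by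
        rw [hd', mul_comm, Complex.mul_conj]
        push_cast
        ring
      have h4 : Complex.normSq α = (‖α‖)^2 := (Complex.sq_norm α).symm
      rw [this, Complex.norm_real, Real.norm_eq_abs,
        _root_.abs_of_nonneg (by nlinarith [norm_nonneg α] : (0:ℝ) ≤ 1 - Complex.normSq α), h4]
    rw [hdval] at habs2
    exact habs2
  · push_neg at hcase
    obtain ⟨z0, hz0, hge⟩ := hcase
    have heq : ‖v z0‖ = 1 := le_antisymm (hvb z0 hz0) hge
    have hmax : IsMaxOn (norm ∘ v) (ball (0:ℂ) 1) z0 := by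
      intro y hy
      simp only [Function.comp_apply, Set.mem_setOf_eq]
      calc ‖v y‖ = ‖v y‖ := rfl
      _ ≤ 1 := hvb y hy
      _ = ‖v z0‖ := heq.symm
      _ = ‖v z0‖ := rfl
    have hconst := Complex.eqOn_of_isPreconnected_of_isMaxOn_norm
      (convex_ball (0:ℂ) 1).isPreconnected isOpen_ball hvd hz0 hmax
    have hvev : v =ᶠ[nhds 0] (fun _ => v z0) := by
      filter_upwards [isOpen_ball.mem_nhds h0] with y hy
      exact hconst hy
    have hderiv0 : deriv v 0 = 0 := by
      rw [hvev.deriv_eq]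
      simp
    have hv0eq : v 0 = v z0 := hconst h0
    rw [hderiv0, hv0eq, heq]
    simp

set_option maxHeartbeats 3200000 in
theorem starlike_fekete_szego_bound
    (q : ℝ) (hq0 : 0 < q) (hq1 : q < 1)
    (a : ℕ → ℂ) (ha0 : a 0 = 0) (ha1 : a 1 = 1)
    (f F DqF : ℂ → ℂ)
    (hf : ∀ z ∈ Metric.ball (0 : ℂ) 1, HasSum (fun n : ℕ => a n * z ^ n) (f z))
    (hF : ∀ z ∈ Metric.ball (0 : ℂ) 1,
      HasSum (fun n : ℕ =>
        (-1 : ℂ) ^ (n - 1) * a n / (((2 * n - 1 : ℕ) : ℂ) * ((n - 1).factorial : ℂ)) * z ^ n)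
        (F z))
    (hDq0 : DqF 0 = 1)
    (hDqF : ∀ z : ℂ, z ≠ 0 → DqF z = (F z - F ((q : ℂ) * z)) / ((1 - (q : ℂ)) * z))
    (ϑ2 ϑ3 : ℝ)
    (hϑ2 : ϑ2 = (1 - q ^ 2) / (1 - q) - 1)
    (hϑ3 : ϑ3 = (1 - q ^ 3) / (1 - q) - 1)
    (w : ℂ → ℂ)
    (hw : AnalyticOnNhd ℂ w (Metric.ball (0 : ℂ) 1))
    (hw0 : w 0 = 0)
    (hwb : ∀ z ∈ Metric.ball (0 : ℂ) 1, ‖w z‖ < 1)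
    (β : ℝ) (hβ1 : -(Real.pi / 2) < β) (hβ2 : β < Real.pi / 2)
    (ϱ : ℂ) (hϱ : ϱ = 1 + Complex.I * (Real.tan β : ℂ))
    (b : ℂ) (hb : b ≠ 0)
    (p : ℂ → ℂ)
    (hp : AnalyticOnNhd ℂ p (Metric.ball (0 : ℂ) 1))
    (hp0 : p 0 = 1)
    (p1 p2 : ℂ) (hp1 : p1 = deriv p 0) (hp2 : p2 = iteratedDeriv 2 p 0 / 2)
    (hFne : ∀ z ∈ Metric.ball (0 : ℂ) 1, z ≠ 0 → F z ≠ 0)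
    (hsub : ∀ z ∈ Metric.ball (0 : ℂ) 1, z ≠ 0 →
      1 + (1 / b) * (ϱ * (z * DqF z / F z) - ϱ) = p (w z))
    (hp1ne : p1 ≠ 0)
    :
    ∀ μ : ℂ, ‖a 3 - μ * (a 2) ^ 2‖ ≤
      (10 * ‖b‖ * ‖p1‖ / (‖ϱ‖ * ϑ3)) *
        max 1 (‖p2 / p1 +
          b * p1 * (10 * (ϑ2 : ℂ) - 9 * μ * (ϑ3 : ℂ)) / (10 * ϱ * (ϑ2 : ℂ) ^ 2)‖) := by
  intro μ
  -- basic nonvanishing facts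
  have h1q : (1:ℝ) - q ≠ 0 := by linarith
  have hq1c : (1:ℂ) - (q:ℂ) ≠ 0 := by
    have : ((1 - q : ℝ) : ℂ) ≠ 0 := by exact_mod_cast h1q
    simpa using this
  have hqc : (q:ℂ) ≠ 0 := by exact_mod_cast hq0.ne'
  have hϱne : ϱ ≠ 0 := by
    rw [hϱ]
    intro h
    have := congrArg Complex.re h
    simp [Complex.add_re, Complex.mul_re] at this
  have hϑ2q : ϑ2 = q := by rw [hϑ2]; field_simp; ring
  have hϑ3q : ϑ3 = q + q^2 := by rw [hϑ3]; field_simp; ring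
  have hϑ3pos : 0 < ϑ3 := by rw [hϑ3q]; nlinarith
  have hϑ2c : ((ϑ2 : ℝ) : ℂ) = (q:ℂ) := by rw [hϑ2q]
  have hϑ3c : ((ϑ3 : ℝ) : ℂ) = (q:ℂ) + (q:ℂ)^2 := by rw [hϑ3q]; push_cast; ring
  have hqq : (q:ℂ) + (q:ℂ)^2 ≠ 0 := by
    have hpos : (0:ℝ) < q + q^2 := by nlinarith
    have : ((q + q^2 : ℝ) : ℂ) ≠ 0 := by exact_mod_cast hpos.ne'
    simpa [Complex.ofReal_add, Complex.ofReal_pow] using this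
  have h0mem : (0:ℂ) ∈ Metric.ball (0:ℂ) 1 := Metric.mem_ball_self one_pos
  have hw0mem : w 0 ∈ Metric.ball (0:ℂ) 1 := by rw [hw0]; exact h0mem
  -- coefficients of F
  set A : ℕ → ℂ :=
    fun n => (-1 : ℂ) ^ (n - 1) * a n / (((2 * n - 1 : ℕ) : ℂ) * ((n - 1).factorial : ℂ))
    with hA
  have hFsum : ∀ y : ℂ, ‖y‖ < 1 → HasSum (fun n => A n * y ^ n) (F y) := by
    intro y hy
    simp only [hA]
    exact hF y (mem_ball_zero_iff.mpr (by exact hy))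
  have hFit := aux_coeff A F one_pos hFsum
  have hFanal : AnalyticAt ℂ F 0 := aux_analyticAt A F one_pos hFsum
  have hA0 : A 0 = 0 := by simp [hA, ha0]
  have hA1 : A 1 = 1 := by norm_num [hA, ha1]
  have hA2 : a 2 = -3 * A 2 := by norm_num [hA]; ring
  have hA3 : a 3 = 10 * A 3 := by norm_num [hA, Nat.factorial]; ring
  have hF0 : F 0 = 0 := by
    have := hFit 0
    rw [iteratedDeriv_zero] at this
    simpa [hA0] using this
  have hdF : deriv F 0 = 1 := by
    have := hFit 1
    rw [iteratedDeriv_one] at this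
    simpa [hA1] using this
  have hF2 : iteratedDeriv 2 F 0 = 2 * A 2 := by
    have := hFit 2
    norm_num [Nat.factorial] at this
    exact this
  have hF3 : iteratedDeriv 3 F 0 = 6 * A 3 := by
    have := hFit 3
    norm_num [Nat.factorial] at this
    exact this
  -- power series of G := z ↦ ϱ * q-difference quotient
  set B : ℕ → ℂ := fun n => ϱ * ((1 - (q:ℂ)^n) / (1 - (q:ℂ))) * A n with hB
  set G : ℂ → ℂ := fun z => ϱ * ((F z - F ((q:ℂ) * z)) / (1 - (q:ℂ))) with hG
  have hGsum : ∀ y : ℂ, ‖y‖ < 1 → HasSum (fun n => B n * y ^ n) (G y) := by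
    intro y hy
    have hqy : ‖(q:ℂ) * y‖ < 1 := by
      rw [norm_mul, Complex.norm_real, Real.norm_eq_abs, abs_of_pos hq0]
      nlinarith [norm_nonneg y]
    have h1 := ((hFsum y hy).sub (hFsum _ hqy)).mul_left (ϱ * (1 - (q:ℂ))⁻¹)
    have hfun : (fun n => ϱ * (1 - (q:ℂ))⁻¹ * (A n * y ^ n - A n * ((q:ℂ) * y) ^ n))
        = fun n => B n * y ^ n := by
      funext n
      simp only [hB]
      rw [mul_pow]
      field_simp
    have hval : ϱ * (1 - (q:ℂ))⁻¹ * (F y - F ((q:ℂ) * y)) = G y := by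
      simp only [hG]
      field_simp
    rw [hfun, hval] at h1
    exact h1
  have hGit := aux_coeff B G one_pos hGsum
  -- the function ψ
  set c1 : ℂ := deriv w 0 with hc1def
  set c2 : ℂ := iteratedDeriv 2 w 0 / 2 with hc2def
  set ψ : ℂ → ℂ := fun z => ϱ + b * (p (w z) - 1) with hψ
  have hpwanal : AnalyticAt ℂ (fun z => p (w z)) 0 := (hp (w 0) hw0mem).comp (hw 0 h0mem)
  have hψanal : AnalyticAt ℂ ψ 0 :=
    analyticAt_const.add (analyticAt_const.mul (hpwanal.sub analyticAt_const))
  have hψ0 : ψ 0 = ϱ := by simp [hψ, hw0, hp0]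
  have hderiv_pw_ev : deriv (fun z => p (w z)) =ᶠ[nhds 0]
      fun z => deriv p (w z) * deriv w z := by
    filter_upwards [Metric.isOpen_ball.mem_nhds h0mem] with z hz
    have h1 : DifferentiableAt ℂ p (w z) :=
      (hp (w z) (mem_ball_zero_iff.mpr
        (by exact hwb z hz))).differentiableAt
    have h2 : DifferentiableAt ℂ w z := (hw z hz).differentiableAt
    exact deriv_comp (x := z) h1 h2
  have hψd_ev : deriv ψ =ᶠ[nhds 0] fun z => b * (deriv p (w z) * deriv w z) := by
    filter_upwards [Metric.isOpen_ball.mem_nhds h0mem, hderiv_pw_ev] with z hz hdz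
    have hwzmem : w z ∈ Metric.ball (0:ℂ) 1 :=
      mem_ball_zero_iff.mpr (by exact hwb z hz)
    have h1 : DifferentiableAt ℂ (fun y => p (w y)) z :=
      ((hp (w z) hwzmem).comp (hw z hz)).differentiableAt
    have e : deriv ψ z = b * deriv (fun y => p (w y)) z := by
      show deriv (fun y => ϱ + b * (p (w y) - 1)) z = _
      rw [deriv_const_add, deriv_const_mul _ (h1.sub_const 1)]
      congr 1
      exact deriv_sub_const 1
    rw [e, hdz]
  have hψd0 : deriv ψ 0 = b * (p1 * c1) := by
    have h := hψd_ev.self_of_nhds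
    rw [h]
    show b * (deriv p (w 0) * deriv w 0) = b * (p1 * c1)
    rw [hw0, ← hp1]
  have hψ2 : iteratedDeriv 2 ψ 0 = b * (2 * p2 * c1 ^ 2 + p1 * (2 * c2)) := by
    have e2 : iteratedDeriv 2 ψ 0 = deriv (deriv ψ) 0 := by
      rw [iteratedDeriv_succ, iteratedDeriv_one]
    rw [e2, hψd_ev.deriv_eq]
    have hdpw : AnalyticAt ℂ (fun z => deriv p (w z)) 0 :=
      (aux_deriv_analyticAt (hp (w 0) hw0mem)).comp (hw 0 h0mem)
    have hdw : DifferentiableAt ℂ (deriv w) 0 :=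
      (aux_deriv_analyticAt (hw 0 h0mem)).differentiableAt
    rw [deriv_const_mul _ (hdpw.differentiableAt.fun_mul hdw),
      deriv_fun_mul hdpw.differentiableAt hdw]
    have hchain : deriv (fun z => deriv p (w z)) 0 = deriv (deriv p) (w 0) * deriv w 0 :=
      deriv_comp (x := 0) (aux_deriv_analyticAt (hp (w 0) hw0mem)).differentiableAt
        (hw 0 h0mem).differentiableAt
    rw [hchain, hw0]
    have hiter2 : ∀ g : ℂ → ℂ, deriv (deriv g) 0 = iteratedDeriv 2 g 0 := by
      intro g
      rw [iteratedDeriv_succ, iteratedDeriv_one]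
    rw [hiter2, hiter2]
    have hpp2 : iteratedDeriv 2 p 0 = 2 * p2 := by rw [hp2]; ring
    have hww2 : iteratedDeriv 2 w 0 = 2 * c2 := by rw [hc2def]; ring
    rw [hpp2, hww2, ← hp1, ← hc1def]
    ring
  -- the fundamental identity F * ψ = G near 0
  have hFψG : (fun z => F z * ψ z) =ᶠ[nhds 0] G := by
    filter_upwards [Metric.isOpen_ball.mem_nhds h0mem] with z hz
    by_cases hz0 : z = 0
    · subst hz0
      show F 0 * ψ 0 = G 0
      simp [hG, hF0]
    · have e := hsub z hz hz0
      have hFz := hFne z hz hz0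
      show F z * (ϱ + b * (p (w z) - 1)) = ϱ * ((F z - F ((q:ℂ) * z)) / (1 - (q:ℂ)))
      rw [← e, hDqF z hz0]
      field_simp
      ring
  -- coefficient identities
  have key2 : iteratedDeriv 2 (fun z => F z * ψ z) 0 = iteratedDeriv 2 G 0 :=
    (evIteratedDeriv hFψG 2).self_of_nhds
  have key3 : iteratedDeriv 3 (fun z => F z * ψ z) 0 = iteratedDeriv 3 G 0 :=
    (evIteratedDeriv hFψG 3).self_of_nhds
  rw [aux_iteratedDeriv_two_mul hFanal hψanal, hGit 2] at key2
  rw [aux_iteratedDeriv_three_mul hFanal hψanal, hGit 3] at key3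
  rw [hF0, hF2, hdF, hψ0, hψd0, hψ2] at key2 key3
  rw [hF3] at key3
  simp only [hB] at key2 key3
  -- turn them into clean equations
  have hq2 : (1 - (q:ℂ)^2) / (1 - (q:ℂ)) = 1 + (q:ℂ) := by
    field_simp
    ring
  have hq3 : (1 - (q:ℂ)^3) / (1 - (q:ℂ)) = 1 + (q:ℂ) + (q:ℂ)^2 := by
    field_simp
    ring
  have E2 : ϱ * (q:ℂ) * A 2 = b * p1 * c1 := by
    have h2fac : ((Nat.factorial 2 : ℕ) : ℂ) = 2 := by norm_num [Nat.factorial]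
    rw [h2fac, hq2] at key2
    linear_combination (-1/2 : ℂ) * key2
  have E3 : ϱ * ((q:ℂ) + (q:ℂ)^2) * A 3 = A 2 * (b * p1 * c1) + b * p2 * c1^2 + b * p1 * c2 := by
    have h3fac : ((Nat.factorial 3 : ℕ) : ℂ) = 6 := by norm_num [Nat.factorial]
    rw [h3fac, hq3] at key3
    linear_combination (-1/6 : ℂ) * key3
  -- the key algebraic identity
  set T : ℂ := p2 / p1 + b * p1 * (10 * (ϑ2 : ℂ) - 9 * μ * (ϑ3 : ℂ)) / (10 * ϱ * (ϑ2 : ℂ) ^ 2)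
    with hT
  set K : ℂ := 10 * b * p1 / (ϱ * ((ϑ3 : ℝ) : ℂ)) with hK
  have hkey : a 3 - μ * (a 2) ^ 2 = K * (c2 + T * c1 ^ 2) := by
    rw [hA2, hA3, hK, hϑ3c, div_mul_eq_mul_div, eq_div_iff (mul_ne_zero hϱne hqq)]
    have hden : 10 * ϱ * (q:ℂ) ^ 2 ≠ 0 := by
      have : (q:ℂ) ^ 2 ≠ 0 := pow_ne_zero 2 hqc
      exact mul_ne_zero (mul_ne_zero (by norm_num) hϱne) this
    have hTrel : T * (p1 * (10 * ϱ * (q:ℂ) ^ 2)) = p2 * (10 * ϱ * (q:ℂ) ^ 2)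
        + b * p1 * (10 * (q:ℂ) - 9 * μ * ((q:ℂ) + (q:ℂ) ^ 2)) * p1 := by
      have h1 : p2 / p1 * p1 = p2 := div_mul_cancel₀ _ hp1ne
      have h2 : b * p1 * (10 * (q:ℂ) - 9 * μ * ((q:ℂ) + (q:ℂ) ^ 2)) / (10 * ϱ * (q:ℂ) ^ 2)
          * (10 * ϱ * (q:ℂ) ^ 2) = b * p1 * (10 * (q:ℂ) - 9 * μ * ((q:ℂ) + (q:ℂ) ^ 2)) :=
        div_mul_cancel₀ _ hden
      rw [hT, hϑ2c, hϑ3c]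
      linear_combination (10 * ϱ * (q:ℂ) ^ 2) * h1 + p1 * h2
    apply mul_left_cancel₀ (mul_ne_zero hp1ne hden)
    linear_combination (100*ϱ*(q:ℂ)^2*p1) * E3 - 10*b*p1*c1^2 * hTrel +
      (-90*μ*((q:ℂ)+(q:ℂ)^2)*p1*(ϱ*(q:ℂ)*A 2 + b*p1*c1) + 100*p1^2*(q:ℂ)*b*c1) * E2
  -- Schwarz bounds
  obtain ⟨hs1, hs2⟩ := aux_schwarz_coeff hw hw0 hwb
  rw [← hc1def] at hs1
  rw [← hc1def, ← hc2def] at hs2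
  set M : ℝ := max 1 (‖T‖) with hM
  have hTb : ‖c2 + T * c1 ^ 2‖ ≤ M := by
    have h1 : ‖c2 + T * c1 ^ 2‖ ≤
        ‖c2‖ + ‖T‖ * (‖c1‖) ^ 2 := by
      calc ‖c2 + T * c1 ^ 2‖ ≤ ‖c2‖ + ‖T * c1 ^ 2‖ :=
            norm_add_le _ _
      _ = ‖c2‖ + ‖T‖ * (‖c1‖) ^ 2 := by
            rw [norm_mul, norm_pow]
    have h2 : (1:ℝ) ≤ M := le_max_left _ _
    have h3 : ‖T‖ ≤ M := le_max_right _ _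
    have h4 : (‖c1‖) ^ 2 ≤ 1 := by nlinarith [norm_nonneg c1]
    nlinarith [norm_nonneg T, norm_nonneg c1]
  have hKabs : ‖K‖ = 10 * ‖b‖ * ‖p1‖ / (‖ϱ‖ * ϑ3) := by
    rw [hK, norm_div, norm_mul, norm_mul, norm_mul, Complex.norm_real, Real.norm_eq_abs,
      _root_.abs_of_pos hϑ3pos]
    norm_num
  rw [hkey, norm_mul, hKabs]
  apply mul_le_mul_of_nonneg_left hTb
  exact div_nonneg (by positivity) (mul_nonneg (norm_nonneg ϱ) hϑ3pos.le)
end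

section
/- Let 0 ≤ α < 1 and take p(z) = (1 + (1 − 2α)z)/(1 − z), so that p₁ = p₂ = 2(1 − α). Under the spirallike-convex subordination hypothesis with this p, for every complex number μ one has |a₃ − μ·a₂²| ≤ (10·|b|·(1 − α)/(|ϱ|·[3]_q)) · max{ 1, | 1 + 2·b·(1 − α)·(5·[2]_q² − 9·μ·[3]_q)/(5·ϱ·[2]_q²) | }. -/
open Metric Complex Filter FormalMultilinearSeries

/-! Auxiliary lemmas -/

lemma moebius_normSq (a ζ : ℂ) :
    Complex.normSq (1 - (starRingEnd ℂ) a * ζ) - Complex.normSq (ζ - a)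
      = (1 - Complex.normSq a) * (1 - Complex.normSq ζ) := by
  simp only [Complex.normSq_apply, Complex.sub_re, Complex.sub_im, Complex.mul_re, Complex.mul_im,
    Complex.one_re, Complex.one_im, Complex.conj_re, Complex.conj_im]
  ring

lemma moebius_lt (a ζ : ℂ) (ha : ‖a‖ < 1) (hζ : ‖ζ‖ < 1) :
    ‖ζ - a‖ < ‖1 - (starRingEnd ℂ) a * ζ‖ := by
  have h := moebius_normSq a ζ
  have h1 : Complex.normSq a < 1 := by rw [← Complex.sq_norm]; nlinarith [norm_nonneg a]
  have h2 : Complex.normSq ζ < 1 := by rw [← Complex.sq_norm]; nlinarith [norm_nonneg ζ]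
  have hpos : Complex.normSq (ζ - a) < Complex.normSq (1 - (starRingEnd ℂ) a * ζ) := by nlinarith
  rw [← Complex.sq_norm, ← Complex.sq_norm] at hpos
  exact lt_of_pow_lt_pow_left₀ 2 (norm_nonneg _) hpos

lemma schwarz_pick_zero_aux {g : ℂ → ℂ} (hg : DifferentiableOn ℂ g (ball (0:ℂ) 1))
    (hlt : ∀ z ∈ ball (0:ℂ) 1, ‖g z‖ < 1) :
    ‖deriv g 0‖ ≤ 1 - (‖g 0‖)^2 := by
  set a := g 0 with ha_def
  have h0mem : (0:ℂ) ∈ ball (0:ℂ) 1 := mem_ball_self one_pos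
  have ha : ‖a‖ < 1 := hlt 0 h0mem
  have hden : ∀ z ∈ ball (0:ℂ) 1, 1 - (starRingEnd ℂ) a * g z ≠ 0 := by
    intro z hz h
    have : ‖(starRingEnd ℂ) a * g z‖ < 1 := by
      rw [norm_mul, Complex.norm_conj]
      calc ‖a‖ * ‖g z‖ ≤ 1 * ‖g z‖ :=
            mul_le_mul_of_nonneg_right ha.le (norm_nonneg _)
        _ < 1 := by simpa using hlt z hz
    have h1 : (starRingEnd ℂ) a * g z = 1 := by linear_combination -h
    rw [h1] at this; simp at this
  set h : ℂ → ℂ := fun z => (g z - a) / (1 - (starRingEnd ℂ) a * g z) with hh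
  have hdiff : DifferentiableOn ℂ h (ball (0:ℂ) 1) :=
    (hg.sub_const a).div ((differentiableOn_const _).sub
      ((differentiableOn_const _).mul hg)) hden
  have h00 : h 0 = 0 := by simp [hh, ha_def]
  have hmaps : Set.MapsTo h (ball (0:ℂ) 1) (ball (h 0) 1) := by
    rw [h00]
    intro z hz
    rw [mem_ball_zero_iff]
    have := moebius_lt a (g z) ha (hlt z hz)
    have hd : ‖1 - (starRingEnd ℂ) a * g z‖ ≠ 0 :=
      norm_ne_zero_iff.mpr (hden z hz)
    rw [hh]
    simp only [norm_div]
    rw [div_lt_one (lt_of_le_of_ne (norm_nonneg _) (Ne.symm hd))]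
    exact this
  have hder1 : ‖deriv h 0‖ ≤ 1 :=
    Complex.norm_deriv_le_one_of_mapsTo_ball hdiff (hmaps.mono_right ball_subset_closedBall) one_pos
  have hgd : DifferentiableAt ℂ g 0 := (hg.differentiableAt (isOpen_ball.mem_nhds h0mem))
  have hdenne : (1 : ℂ) - (starRingEnd ℂ) a * g 0 ≠ 0 := hden 0 h0mem
  have hderiv : deriv h 0 = deriv g 0 / (1 - (Complex.normSq a : ℂ)) := by
    rw [hh]
    rw [deriv_fun_div (hgd.sub_const a) ((differentiableAt_const _).fun_sub
      ((differentiableAt_const _).fun_mul hgd)) hdenne]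
    rw [deriv_sub_const, deriv_const_sub, deriv_const_mul _ hgd]
    rw [← ha_def]
    have hnsq : (starRingEnd ℂ) a * a = (Complex.normSq a : ℂ) := by
      rw [mul_comm, Complex.mul_conj]
    rw [sub_self, zero_mul, sub_zero, hnsq]
    have hne : (1 : ℂ) - (Complex.normSq a : ℂ) ≠ 0 := by rwa [← hnsq]
    field_simp
  have hnsqlt : Complex.normSq a < 1 := by
    rw [← Complex.sq_norm]; nlinarith [norm_nonneg a]
  have habs : ‖deriv g 0‖ = ‖deriv h 0‖ * (1 - Complex.normSq a) := by
    have hne : (1 : ℂ) - (Complex.normSq a : ℂ) ≠ 0 := by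
      intro hcon
      have h1 : (Complex.normSq a : ℂ) = 1 := by linear_combination -hcon
      have := congrArg Complex.re h1
      simp at this
      nlinarith
    have h2 : deriv g 0 = deriv h 0 * (1 - (Complex.normSq a : ℂ)) := by
      rw [hderiv]; field_simp
    rw [h2, norm_mul]
    congr 1
    rw [show (1 : ℂ) - (Complex.normSq a : ℂ) = ((1 - Complex.normSq a : ℝ) : ℂ) by push_cast; ring]
    rw [Complex.norm_real, Real.norm_eq_abs, abs_of_pos (by linarith)]
  rw [habs, Complex.sq_norm a]
  have hfac : (0:ℝ) ≤ 1 - Complex.normSq a := by linarith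
  have h2 := mul_le_mul_of_nonneg_right hder1 hfac
  linarith

lemma schwarz_pick_zero {g : ℂ → ℂ} (hg : DifferentiableOn ℂ g (ball (0:ℂ) 1))
    (hb : ∀ z ∈ ball (0:ℂ) 1, ‖g z‖ ≤ 1) :
    ‖deriv g 0‖ ≤ 1 - (‖g 0‖)^2 := by
  by_cases hmax : ∃ z₀ ∈ ball (0:ℂ) 1, ‖g z₀‖ = 1
  · obtain ⟨z₀, hz₀, habs⟩ := hmax
    have hm : IsMaxOn (norm ∘ g) (ball (0:ℂ) 1) z₀ := by
      intro z hz
      simp only [Function.comp_apply, Set.mem_setOf_eq, habs]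
      exact hb z hz
    have hconst := Complex.eqOn_of_isPreconnected_of_isMaxOn_norm
      (convex_ball (0:ℂ) 1).isPreconnected isOpen_ball hg hz₀ hm
    have h0 : (0:ℂ) ∈ ball (0:ℂ) 1 := mem_ball_self one_pos
    have hev : g =ᶠ[nhds (0:ℂ)] (fun _ => g z₀) :=
      Filter.eventuallyEq_of_mem (isOpen_ball.mem_nhds h0) (fun z hz => hconst hz)
    have hd0 : deriv g 0 = 0 := by rw [hev.deriv_eq, deriv_const]
    rw [hd0]
    simp only [norm_zero]
    have : ‖g 0‖ ≤ 1 := hb 0 h0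
    nlinarith [norm_nonneg (g 0)]
  · push_neg at hmax
    exact schwarz_pick_zero_aux hg (fun z hz => lt_of_le_of_ne (hb z hz) (hmax z hz))

lemma myHasFPowerSeries {D : ℂ → ℂ} {B : ℕ → ℂ}
    (h : ∀ z ∈ Metric.ball (0:ℂ) 1, HasSum (fun n => B n * z ^ n) (D z)) :
    HasFPowerSeriesOnBall D (FormalMultilinearSeries.ofScalars ℂ B) 0 1 := by
  constructor
  · refine ENNReal.le_of_forall_nnreal_lt (fun r hr => ?_)
    have hr1 : (r : ℝ) < 1 := by exact_mod_cast hr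
    have hz : ((r:ℝ) : ℂ) ∈ Metric.ball (0:ℂ) 1 := by
      simp [Complex.norm_real, _root_.abs_of_nonneg r.coe_nonneg, hr1]
    have ht := (h _ hz).summable.tendsto_atTop_zero
    have ht2 := tendsto_zero_iff_norm_tendsto_zero.mp ht
    refine le_radius_of_tendsto _ (l := 0) ?_
    convert ht2 using 2 with n
    rw [ofScalars_norm, norm_mul, norm_pow, Complex.norm_real, Real.norm_eq_abs,
      _root_.abs_of_nonneg r.coe_nonneg]
  · exact one_pos
  · intro y hy
    have hy' : y ∈ Metric.ball (0:ℂ) 1 := by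
      rwa [show ((1:ENNReal)) = ((1:NNReal):ENNReal) by norm_num,
        Metric.emetric_ball_nnreal] at hy
    have := h y hy'
    rw [zero_add]
    convert this using 1
    case e'_3 => rfl
    funext n
    rw [ofScalars_apply_eq, smul_eq_mul]

lemma myIteratedDeriv {D : ℂ → ℂ} {B : ℕ → ℂ}
    (h : HasFPowerSeriesOnBall D (FormalMultilinearSeries.ofScalars ℂ B) 0 1) (n : ℕ) :
    iteratedDeriv n D 0 = (n.factorial : ℂ) * B n := by
  have := h.factorial_smul (1:ℂ) n
  rw [ofScalars_apply_eq, one_pow, smul_eq_mul, mul_one] at this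
  rw [iteratedDeriv_eq_iteratedFDeriv]
  rw [← this, nsmul_eq_mul]

lemma myAnalytic {D : ℂ → ℂ} {B : ℕ → ℂ}
    (h : HasFPowerSeriesOnBall D (FormalMultilinearSeries.ofScalars ℂ B) 0 1) :
    AnalyticOnNhd ℂ D (Metric.ball (0:ℂ) 1) := by
  have := h.analyticOnNhd
  rwa [show ((1:ENNReal)) = ((1:NNReal):ENNReal) by norm_num,
    Metric.emetric_ball_nnreal] at this

lemma wsecond {w : ℂ → ℂ} (hw : AnalyticOnNhd ℂ w (Metric.ball (0:ℂ) 1)) (hw0 : w 0 = 0) :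
    deriv (deriv w) 0 = 2 * deriv (dslope w 0) 0 := by
  have h0 : (0:ℂ) ∈ Metric.ball (0:ℂ) 1 := mem_ball_self one_pos
  set g := dslope w 0 with hg
  have hwdiff : DifferentiableOn ℂ w (Metric.ball (0:ℂ) 1) :=
    fun z hz => (hw z hz).differentiableAt.differentiableWithinAt
  have hgdiff : DifferentiableOn ℂ g (Metric.ball (0:ℂ) 1) :=
    (differentiableOn_dslope (ball_mem_nhds _ one_pos)).mpr hwdiff
  have hgan : AnalyticOnNhd ℂ g (Metric.ball (0:ℂ) 1) := hgdiff.analyticOnNhd isOpen_ball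
  have heqw : ∀ z : ℂ, w z = z * g z := by
    intro z
    rcases eq_or_ne z 0 with rfl | hz0
    · simp [hw0]
    · rw [hg, dslope_of_ne _ hz0, slope_def_field]
      field_simp [hw0]
      simp [hw0, mul_comm]
  have hw'eq : ∀ z ∈ Metric.ball (0:ℂ) 1, deriv w z = g z + z * deriv g z := by
    intro z hz
    have hgz : HasDerivAt g (deriv g z) z :=
      ((hgdiff z hz).differentiableAt (isOpen_ball.mem_nhds hz)).hasDerivAt
    have hd : HasDerivAt (fun z => z * g z) (1 * g z + z * deriv g z) z :=
      (hasDerivAt_id z).mul hgz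
    rw [show w = fun z => z * g z from funext heqw, hd.deriv]
    ring
  have hev : deriv w =ᶠ[nhds (0:ℂ)] (fun z => g z + z * deriv g z) :=
    Filter.eventuallyEq_of_mem (isOpen_ball.mem_nhds h0) hw'eq
  rw [hev.deriv_eq]
  have hg0 : HasDerivAt g (deriv g 0) 0 := ((hgan 0 h0).differentiableAt).hasDerivAt
  have hg'0 : HasDerivAt (deriv g) (deriv (deriv g) 0) 0 :=
    ((hgan.deriv 0 h0).differentiableAt).hasDerivAt
  have hD : HasDerivAt (fun z => g z + z * deriv g z)
      (deriv g 0 + (1 * deriv g 0 + 0 * deriv (deriv g) 0)) 0 :=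
    hg0.add ((hasDerivAt_id 0).mul hg'0)
  rw [hD.deriv]
  ring

lemma coeff_eqs {D w : ℂ → ℂ} {C K : ℂ}
    (hD : AnalyticOnNhd ℂ D (Metric.ball (0:ℂ) 1))
    (hw : AnalyticOnNhd ℂ w (Metric.ball (0:ℂ) 1))
    (hw0 : w 0 = 0) (hD0 : D 0 = 1)
    (hkey : ∀ z ∈ Metric.ball (0:ℂ) 1,
      C * ((z * deriv D z) * (1 - w z)) = K * (D z * w z)) :
    C * deriv D 0 = K * deriv w 0 ∧
    C * (2 * deriv (deriv D) 0 - 2 * deriv D 0 * deriv w 0)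
      = K * (2 * deriv D 0 * deriv w 0 + deriv (deriv w) 0) := by
  have h0 : (0:ℂ) ∈ Metric.ball (0:ℂ) 1 := mem_ball_self one_pos
  have hD' := hD.deriv
  have hD'' := hD'.deriv
  have hw' := hw.deriv
  set L : ℂ → ℂ := fun z => C * ((z * deriv D z) * (1 - w z)) with hL
  set R : ℂ → ℂ := fun z => K * (D z * w z) with hR
  have heq : L =ᶠ[nhds (0:ℂ)] R :=
    Filter.eventuallyEq_of_mem (isOpen_ball.mem_nhds h0) hkey
  have hLz : ∀ z ∈ Metric.ball (0:ℂ) 1, HasDerivAt L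
      (C * ((1 * deriv D z + z * deriv (deriv D) z) * (1 - w z)
        + (z * deriv D z) * (0 - deriv w z))) z := by
    intro z hz
    exact ((((hasDerivAt_id z).mul (hD' z hz).differentiableAt.hasDerivAt).mul
      ((hasDerivAt_const z 1).sub (hw z hz).differentiableAt.hasDerivAt)).const_mul C)
  have hRz : ∀ z ∈ Metric.ball (0:ℂ) 1, HasDerivAt R
      (K * (deriv D z * w z + D z * deriv w z)) z := by
    intro z hz
    exact (((hD z hz).differentiableAt.hasDerivAt.mul
      (hw z hz).differentiableAt.hasDerivAt).const_mul K)
  constructor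
  · have h1 := heq.deriv_eq
    rw [(hLz 0 h0).deriv, (hRz 0 h0).deriv] at h1
    rw [hw0, hD0] at h1
    linear_combination h1
  · set L1 : ℂ → ℂ := fun z => C * ((1 * deriv D z + z * deriv (deriv D) z) * (1 - w z)
        + (z * deriv D z) * (0 - deriv w z)) with hL1
    set R1 : ℂ → ℂ := fun z => K * (deriv D z * w z + D z * deriv w z) with hR1
    have hevL : deriv L =ᶠ[nhds (0:ℂ)] L1 :=
      Filter.eventuallyEq_of_mem (isOpen_ball.mem_nhds h0) (fun z hz => (hLz z hz).deriv)
    have hevR : deriv R =ᶠ[nhds (0:ℂ)] R1 :=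
      Filter.eventuallyEq_of_mem (isOpen_ball.mem_nhds h0) (fun z hz => (hRz z hz).deriv)
    have h2 : deriv (deriv L) 0 = deriv (deriv R) 0 := (heq.deriv).deriv_eq
    rw [hevL.deriv_eq, hevR.deriv_eq] at h2
    have hD'0 : HasDerivAt (deriv D) (deriv (deriv D) 0) 0 :=
      (hD' 0 h0).differentiableAt.hasDerivAt
    have hD''0 : HasDerivAt (deriv (deriv D)) (deriv (deriv (deriv D)) 0) 0 :=
      (hD'' 0 h0).differentiableAt.hasDerivAt
    have hw0' : HasDerivAt w (deriv w 0) 0 := (hw 0 h0).differentiableAt.hasDerivAt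
    have hw'0 : HasDerivAt (deriv w) (deriv (deriv w) 0) 0 :=
      (hw' 0 h0).differentiableAt.hasDerivAt
    have hD00 : HasDerivAt D (deriv D 0) 0 := (hD 0 h0).differentiableAt.hasDerivAt
    have hu : HasDerivAt (fun z => 1 * deriv D z + z * deriv (deriv D) z)
        (1 * deriv (deriv D) 0 + (1 * deriv (deriv D) 0 + 0 * deriv (deriv (deriv D)) 0)) 0 :=
      (hD'0.const_mul 1).add ((hasDerivAt_id 0).mul hD''0)
    have hv : HasDerivAt (fun z => 1 - w z) (0 - deriv w 0) 0 :=
      (hasDerivAt_const 0 1).sub hw0'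
    have hs : HasDerivAt (fun z => z * deriv D z)
        (1 * deriv D 0 + 0 * deriv (deriv D) 0) 0 := (hasDerivAt_id 0).mul hD'0
    have ht : HasDerivAt (fun z => 0 - deriv w z) (0 - deriv (deriv w) 0) 0 :=
      (hasDerivAt_const 0 0).sub hw'0
    have hL1d := (((hu.mul hv).add (hs.mul ht)).const_mul C)
    have hR1d := ((hD'0.mul hw0').add (hD00.mul hw'0)).const_mul K
    simp only [Pi.mul_apply, Pi.add_apply] at hL1d hR1d
    rw [hL1d.deriv, hR1d.deriv] at h2
    simp only [hw0, hD0] at h2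
    linear_combination h2

lemma max_bound {c1 c2 t : ℂ} (h1 : ‖c1‖ ≤ 1)
    (h2 : ‖c2‖ ≤ 1 - (‖c1‖)^2) :
    ‖c2 + t * c1^2‖ ≤ max 1 (‖t‖) := by
  have hs : (‖c1‖)^2 ≤ 1 := by nlinarith [norm_nonneg c1]
  have hs0 : (0:ℝ) ≤ (‖c1‖)^2 := sq_nonneg _
  have hM1 : (1:ℝ) ≤ max 1 (‖t‖) := le_max_left _ _
  have hM2 : ‖t‖ ≤ max 1 (‖t‖) := le_max_right _ _
  have step : ‖c2 + t * c1^2‖ ≤ ‖c2‖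
      + ‖t‖ * (‖c1‖)^2 := by
    refine le_trans (norm_add_le _ _) ?_
    rw [norm_mul, norm_pow]
  have p1 : (0:ℝ) ≤ (1 - (‖c1‖)^2) * (max 1 (‖t‖) - 1) := by
    apply mul_nonneg <;> linarith
  have p2 : (0:ℝ) ≤ (‖c1‖)^2 * (max 1 (‖t‖) - ‖t‖) := by
    apply mul_nonneg <;> linarith
  nlinarith

/-! Main theorem -/

set_option maxHeartbeats 2000000 in
theorem convex_fekete_szego_bound_alpha
    (q : ℝ) (hq0 : 0 < q) (hq1 : q < 1)
    (a : ℕ → ℂ) (ha0 : a 0 = 0) (ha1 : a 1 = 1)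
    (f F DqF : ℂ → ℂ)
    (hf : ∀ z ∈ Metric.ball (0 : ℂ) 1, HasSum (fun n : ℕ => a n * z ^ n) (f z))
    (hF : ∀ z ∈ Metric.ball (0 : ℂ) 1,
      HasSum (fun n : ℕ =>
        (-1 : ℂ) ^ (n - 1) * a n / (((2 * n - 1 : ℕ) : ℂ) * ((n - 1).factorial : ℂ)) * z ^ n)
        (F z))
    (hDq0 : DqF 0 = 1)
    (hDqF : ∀ z : ℂ, z ≠ 0 → DqF z = (F z - F ((q : ℂ) * z)) / ((1 - (q : ℂ)) * z))
    (Q2 Q3 : ℝ)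
    (hQ2 : Q2 = (1 - q ^ 2) / (1 - q))
    (hQ3 : Q3 = (1 - q ^ 3) / (1 - q))
    (w : ℂ → ℂ)
    (hw : AnalyticOnNhd ℂ w (Metric.ball (0 : ℂ) 1))
    (hw0 : w 0 = 0)
    (hwb : ∀ z ∈ Metric.ball (0 : ℂ) 1, ‖w z‖ < 1)
    (β : ℝ) (hβ1 : -(Real.pi / 2) < β) (hβ2 : β < Real.pi / 2)
    (ϱ : ℂ) (hϱ : ϱ = 1 + Complex.I * (Real.tan β : ℂ))
    (b : ℂ) (hb : b ≠ 0)
    (α : ℝ) (hα0 : 0 ≤ α) (hα1 : α < 1)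
    (hDne : ∀ z ∈ Metric.ball (0 : ℂ) 1, DqF z ≠ 0)
    (hsub : ∀ z ∈ Metric.ball (0 : ℂ) 1,
      1 + (1 / b) * (ϱ * (deriv (fun u => u * DqF u) z / DqF z) - ϱ)
        = (1 + (1 - 2 * (α : ℂ)) * w z) / (1 - w z))
    :
    ∀ μ : ℂ, ‖a 3 - μ * (a 2) ^ 2‖ ≤
      (10 * ‖b‖ * (1 - α) / (‖ϱ‖ * Q3)) *
        max 1 (‖1 +
          2 * b * (1 - (α : ℂ)) * (5 * (Q2 : ℂ) ^ 2 - 9 * μ * (Q3 : ℂ)) / (5 * ϱ * (Q2 : ℂ) ^ 2)‖) := by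
  intro μ
  have h0mem : (0:ℂ) ∈ Metric.ball (0:ℂ) 1 := mem_ball_self one_pos
  have hq : (1:ℝ) - q ≠ 0 := by linarith
  have hqC : (1:ℂ) - (q:ℂ) ≠ 0 := by
    intro h
    apply hq
    have : ((1 - q : ℝ) : ℂ) = 0 := by push_cast; linear_combination h
    exact_mod_cast this
  have hQ2' : Q2 = 1 + q := by rw [hQ2]; field_simp; ring
  have hQ3' : Q3 = 1 + q + q^2 := by rw [hQ3]; field_simp; ring
  have hQ2pos : 0 < Q2 := by rw [hQ2']; linarith
  have hQ3pos : 0 < Q3 := by rw [hQ3']; nlinarith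
  have hQ2C : ((Q2:ℝ):ℂ) ≠ 0 := by exact_mod_cast Complex.ofReal_ne_zero.mpr hQ2pos.ne'
  have hQ3C : ((Q3:ℝ):ℂ) ≠ 0 := by exact_mod_cast Complex.ofReal_ne_zero.mpr hQ3pos.ne'
  have hϱre : ϱ.re = 1 := by rw [hϱ]; simp
  have hϱne : ϱ ≠ 0 := by
    intro h; rw [h] at hϱre; simp at hϱre
  -- the power series of DqF
  obtain ⟨A, hA⟩ : ∃ A : ℕ → ℂ, A = fun n =>
    (-1 : ℂ) ^ (n - 1) * a n / (((2 * n - 1 : ℕ) : ℂ) * ((n - 1).factorial : ℂ)) := ⟨_, rfl⟩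
  obtain ⟨B, hB⟩ : ∃ B : ℕ → ℂ, B = fun n => (1 - (q:ℂ)^(n+1))/(1 - (q:ℂ)) * A (n+1) := ⟨_, rfl⟩
  have hA1 : A 1 = 1 := by simp [hA, ha1]
  have hBsum : ∀ z ∈ Metric.ball (0:ℂ) 1, HasSum (fun n => B n * z ^ n) (DqF z) := by
    intro z hz
    rcases eq_or_ne z 0 with rfl | hz0
    · have hz' : ∀ n : ℕ, n ≠ 0 → B n * (0:ℂ) ^ n = 0 := by
        intro n hn
        simp [zero_pow hn]
      have h0 := hasSum_single (f := fun n => B n * (0:ℂ) ^ n) 0 hz'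
      simpa [hB, hA1, hDq0, div_self hqC] using h0
    · have hqz : (q:ℂ) * z ∈ Metric.ball (0:ℂ) 1 := by
        rw [mem_ball_zero_iff] at hz ⊢
        rw [norm_mul]
        calc ‖(q:ℂ)‖ * ‖z‖ ≤ 1 * ‖z‖ := by
              apply mul_le_mul_of_nonneg_right _ (norm_nonneg _)
              simp only [Complex.norm_real, Real.norm_eq_abs, _root_.abs_of_pos hq0]
              linarith
          _ < 1 := by simpa using hz
      have h1 := (hF z hz).sub (hF _ hqz)
      have h1' : HasSum (fun n : ℕ => A n * (1 - (q:ℂ)^n) * z ^ n) (F z - F ((q:ℂ)*z)) := by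
        convert h1 using 2 with n
        case e'_3 => rfl
        rw [hA, mul_pow]
        ring
      have h2 : HasSum (fun n : ℕ => A (n+1) * (1 - (q:ℂ)^(n+1)) * z ^ (n+1))
          (F z - F ((q:ℂ)*z) - ∑ i ∈ Finset.range 1, A i * (1 - (q:ℂ)^i) * z ^ i) :=
        (hasSum_nat_add_iff' 1).mpr h1'
      have h3 : HasSum (fun n : ℕ => A (n+1) * (1 - (q:ℂ)^(n+1)) * z ^ (n+1))
          (F z - F ((q:ℂ)*z)) := by
        simpa using h2
      have h4 := h3.mul_right (((1 - (q:ℂ)) * z)⁻¹)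
      have h5 : HasSum (fun n => B n * z ^ n) ((F z - F ((q:ℂ)*z)) * ((1 - (q:ℂ)) * z)⁻¹) := by
        convert h4 using 2 with n
        case e'_3 => rfl
        rw [hB]
        field_simp
        ring
      rw [hDqF z hz0, div_eq_mul_inv]
      exact h5
  have hps := myHasFPowerSeries hBsum
  have hDan : AnalyticOnNhd ℂ DqF (Metric.ball (0:ℂ) 1) := myAnalytic hps
  -- coefficient values
  have hA2 : A 2 = -(a 2)/3 := by
    rw [hA]; norm_num
  have hA3 : A 3 = a 3/10 := by
    rw [hA]; norm_num [Nat.factorial]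
  have hB1 : B 1 = ((Q2:ℝ):ℂ) * (-(a 2)/3) := by
    rw [hB]
    show (1 - (q:ℂ)^(1+1))/(1 - (q:ℂ)) * A (1+1) = _
    norm_num [hA2, hQ2]
  have hB2 : B 2 = ((Q3:ℝ):ℂ) * (a 3/10) := by
    rw [hB]
    show (1 - (q:ℂ)^(2+1))/(1 - (q:ℂ)) * A (2+1) = _
    norm_num [hA3, hQ3]
  have hd1 : deriv DqF 0 = B 1 := by
    have := myIteratedDeriv hps 1
    rw [iteratedDeriv_one] at this
    simpa using this
  have hd2 : deriv (deriv DqF) 0 = 2 * B 2 := by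
    have := myIteratedDeriv hps 2
    rw [iteratedDeriv_succ, iteratedDeriv_one] at this
    norm_num at this
    exact this
  -- the Schwarz function coefficients
  have hwdiff : DifferentiableOn ℂ w (Metric.ball (0:ℂ) 1) :=
    fun z hz => (hw z hz).differentiableAt.differentiableWithinAt
  have hgdiff : DifferentiableOn ℂ (dslope w 0) (Metric.ball (0:ℂ) 1) :=
    (differentiableOn_dslope (ball_mem_nhds _ one_pos)).mpr hwdiff
  have hmapsw : Set.MapsTo w (Metric.ball (0:ℂ) 1) (Metric.ball (w 0) 1) := by
    rw [hw0]
    intro z hz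
    rw [mem_ball_zero_iff]
    exact hwb z hz
  have hgb : ∀ z ∈ Metric.ball (0:ℂ) 1, ‖dslope w 0 z‖ ≤ 1 := by
    intro z hz
    have := Complex.norm_dslope_le_div_of_mapsTo_ball hwdiff (hmapsw.mono_right ball_subset_closedBall) hz
    simpa using this
  obtain ⟨c1, hc1g⟩ : ∃ c : ℂ, dslope w 0 0 = c := ⟨_, rfl⟩
  obtain ⟨c2, hc2g⟩ : ∃ c : ℂ, deriv (dslope w 0) 0 = c := ⟨_, rfl⟩
  have hc1 : deriv w 0 = c1 := by rw [← hc1g, dslope_same]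
  have hc2 : deriv (deriv w) 0 = 2 * c2 := by rw [wsecond hw hw0, hc2g]
  have habs1 : ‖c1‖ ≤ 1 := hc1g ▸ hgb 0 h0mem
  have habs2 : ‖c2‖ ≤ 1 - (‖c1‖)^2 := by
    rw [← hc1g, ← hc2g]
    exact schwarz_pick_zero hgdiff hgb
  -- key functional identity
  have hkey : ∀ z ∈ Metric.ball (0:ℂ) 1,
      ϱ * ((z * deriv DqF z) * (1 - w z)) = (2*b*(1-(α:ℂ))) * (DqF z * w z) := by
    intro z hz
    have hdz := (hDan z hz).differentiableAt
    have hder : deriv (fun u => u * DqF u) z = 1 * DqF z + z * deriv DqF z :=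
      ((hasDerivAt_id z).mul hdz.hasDerivAt).deriv
    have h := hsub z hz
    rw [hder] at h
    have hwne : (1:ℂ) - w z ≠ 0 := by
      intro hcon
      have h1 : w z = 1 := by linear_combination -hcon
      have := hwb z hz
      rw [h1] at this
      simp at this
    have hDz := hDne z hz
    field_simp at h
    linear_combination h
  obtain ⟨E1, E2⟩ := coeff_eqs hDan hw hw0 hDq0 hkey
  rw [hd1, hc1] at E1
  rw [hd1, hd2, hc1, hc2] at E2
  obtain ⟨k, hk⟩ : ∃ k : ℂ, 2*b*(1-(α:ℂ)) = k := ⟨_, rfl⟩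
  rw [hk] at E1 E2
  -- solve
  have hϱ2ne : (4:ℂ)*ϱ^2 ≠ 0 := by
    simp [hϱne]
  have hB1e : B 1 = k*c1/ϱ := by
    field_simp
    linear_combination E1
  have hB2e : B 2 = (2*k^2*c1^2 + 2*k*ϱ*c2 + 2*k*ϱ*c1^2)/(4*ϱ^2) := by
    rw [eq_div_iff hϱ2ne]
    linear_combination ϱ*E2 + (2*ϱ*c1 + 2*k*c1)*E1
  have hA2' : a 2 = -3 * B 1 / ((Q2:ℝ):ℂ) := by
    rw [hB1]
    field_simp
  have hA3' : a 3 = 10 * B 2 / ((Q3:ℝ):ℂ) := by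
    rw [hB2]
    field_simp
  -- main identity
  have hX : a 3 - μ * (a 2)^2
      = (5*k/(ϱ*((Q3:ℝ):ℂ))) * (c2 +
        (1 + k * (5 * ((Q2:ℝ):ℂ) ^ 2 - 9 * μ * ((Q3:ℝ):ℂ))
          / (5 * ϱ * ((Q2:ℝ):ℂ) ^ 2)) * c1^2) := by
    rw [hA3', hA2', hB2e, hB1e]
    field_simp
    ring
  rw [hX, norm_mul, ← hk]
  have hKabs : ‖5*(2*b*(1-(α:ℂ)))/(ϱ*((Q3:ℝ):ℂ))‖
      = 10 * ‖b‖ * (1-α) / (‖ϱ‖ * Q3) := by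
    rw [norm_div, norm_mul, norm_mul]
    rw [show (1:ℂ) - (α:ℂ) = ((1-α:ℝ):ℂ) by push_cast; ring]
    rw [show (5:ℂ) = ((5:ℝ):ℂ) by norm_num]
    rw [show (2:ℂ)*b = b*((2:ℝ):ℂ) by push_cast; ring]
    rw [norm_mul, norm_mul, Complex.norm_real, Complex.norm_real, Complex.norm_real,
      Complex.norm_real, Real.norm_eq_abs, Real.norm_eq_abs, Real.norm_eq_abs, Real.norm_eq_abs, _root_.abs_of_pos (by linarith : (0:ℝ) < 1 - α),
      _root_.abs_of_pos hQ3pos]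
    norm_num
    ring
  rw [hKabs]
  refine mul_le_mul_of_nonneg_left (max_bound habs1 habs2) ?_
  have h1 : (0:ℝ) ≤ 10 * ‖b‖ * (1 - α) := by
    nlinarith [norm_nonneg b]
  exact div_nonneg h1 (mul_nonneg (norm_nonneg ϱ) hQ3pos.le)
end
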